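/- Let P = (H, V, τ, A) be a span program on [q]^n, let x ∈ [q]^n, let α > 0, and let ω : V → ℂ be a negative witness for x (so ω(τ) = 1 and ω∘A∘Π_{H(x)} = 0). Let r ∈ H denote the Riesz representative of the functional ω∘A on H, and define v := |0̂⟩ + α·r ∈ H̃ (equivalently, v is α times the Riesz representative of the functional h ↦ ω(A_α h) on H̃). Then: (i) Π_x v = |0̂⟩; (ii) v is orthogonal to ker A_α; and (iii) ‖v‖² = 1 + α²‖ω∘A‖². -/

import Mathlib

noncomputable section

/-- A span program `P = (H, V, τ, A)` on `[q]^m`: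
finite-dimensional complex inner product spaces `H` and `V`, an orthogonal
decomposition `H = H_1 ⊕ ⋯ ⊕ H_m ⊕ H_true ⊕ H_false`, subspaces
`H_{j,a} ⊆ H_j` with `Σ_a H_{j,a} = H_j`, a target `τ ∈ V` and `A : H → V`. -/
structure SpanProgram (q m : ℕ) where
  H : Type
  V : Type
  [nH : NormedAddCommGroup H]
  [iH : InnerProductSpace ℂ H]
  [fH : FiniteDimensional ℂ H]
  [nV : NormedAddCommGroup V]
  [iV : InnerProductSpace ℂ V]
  [fV : FiniteDimensional ℂ V]
  Hj : Fin m → Submodule ℂ H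
  Htrue : Submodule ℂ H
  Hfalse : Submodule ℂ H
  ortho : ∀ i i' : Fin m ⊕ Bool, i ≠ i' →
    (Sum.elim Hj (fun b => if b then Htrue else Hfalse) i).IsOrtho
      (Sum.elim Hj (fun b => if b then Htrue else Hfalse) i')
  spans : (⨆ j, Hj j) ⊔ Htrue ⊔ Hfalse = ⊤
  Hja : Fin m → Fin q → Submodule ℂ H
  Hja_le : ∀ j a, Hja j a ≤ Hj j
  Hja_sup : ∀ j, (⨆ a, Hja j a) = Hj j
  tau : V
  A : H →ₗ[ℂ] V

attribute [instance] SpanProgram.nH SpanProgram.iH SpanProgram.fH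
attribute [instance] SpanProgram.nV SpanProgram.iV SpanProgram.fV

namespace SpanProgram

variable {q m : ℕ} (P : SpanProgram q m)

/-- `H(x) = H_{1,x_1} ⊕ ⋯ ⊕ H_{m,x_m} ⊕ H_true`. -/
def Hx (x : Fin m → Fin q) : Submodule ℂ P.H :=
  (⨆ j, P.Hja j (x j)) ⊔ P.Htrue

/-- `w` is a positive witness for `x`: `w ∈ H(x)` and `A w = τ`. -/
def PosWitness (x : Fin m → Fin q) (w : P.H) : Prop :=
  w ∈ P.Hx x ∧ P.A w = P.tau

/-- `ω` is a negative witness for `x`: `ω(τ) = 1` and `ω ∘ A ∘ Π_{H(x)} = 0`. -/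
def NegWitness (x : Fin m → Fin q) (ω : P.V →ₗ[ℂ] ℂ) : Prop :=
  ω P.tau = 1 ∧ ∀ h ∈ P.Hx x, ω (P.A h) = 0

def HasPos (x : Fin m → Fin q) : Prop := ∃ w, P.PosWitness x w

def HasNeg (x : Fin m → Fin q) : Prop := ∃ ω, P.NegWitness x ω

/-- positive witness size: `min{‖w‖² : w a positive witness for x}`. -/
def posSize (x : Fin m → Fin q) : ℝ :=
  sInf {r : ℝ | ∃ w, P.PosWitness x w ∧ r = ‖w‖ ^ 2}

/-- negative witness size: `min{‖ω∘A‖² : ω a negative witness for x}`, where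
`‖ω∘A‖` is the norm of (the Riesz representative of) the functional `ω∘A`. -/
def negSize (x : Fin m → Fin q) : ℝ :=
  sInf {r : ℝ | ∃ ω, P.NegWitness x ω ∧
    r = ‖LinearMap.toContinuousLinearMap (ω ∘ₗ P.A)‖ ^ 2}

open Classical in
/-- the witness size `w(P,x)`. -/
def witSize (x : Fin m → Fin q) : ℝ :=
  if P.HasPos x then P.posSize x else P.negSize x

/-- `P` decides `f` on `X`: every `x ∈ X` with `f x = 1` has a positive witness and
every `x ∈ X` with `f x = 0` has a negative witness. -/
def Decides (X : Set (Fin m → Fin q)) (f : (Fin m → Fin q) → Bool) : Prop :=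
  ∀ x ∈ X, (f x = true → P.HasPos x) ∧ (f x = false → P.HasNeg x)

end SpanProgram


namespace SpanProgram

variable {q m : ℕ} (P : SpanProgram q m)

/-- `H̃ = H ⊕ ℂ|0̂⟩` (with the `L²` direct-sum inner product). -/
def Htilde : Type := WithLp 2 (P.H × ℂ)

instance : NormedAddCommGroup P.Htilde :=
  inferInstanceAs (NormedAddCommGroup (WithLp 2 (P.H × ℂ)))
instance : InnerProductSpace ℂ P.Htilde :=
  inferInstanceAs (InnerProductSpace ℂ (WithLp 2 (P.H × ℂ)))
instance : FiniteDimensional ℂ P.Htilde :=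
  inferInstanceAs (FiniteDimensional ℂ (WithLp 2 (P.H × ℂ)))

/-- the canonical linear identification of `H̃` with `H × ℂ`. -/
def tildeEquiv : P.Htilde ≃ₗ[ℂ] P.H × ℂ := WithLp.linearEquiv 2 ℂ (P.H × ℂ)

/-- the unit vector `|0̂⟩ ∈ H̃`, orthogonal to `H`. -/
def zeroHat : P.Htilde := P.tildeEquiv.symm (0, 1)

/-- the isometric embedding of `H` into `H̃`. -/
def embed : P.H →ₗ[ℂ] P.Htilde :=
  P.tildeEquiv.symm.toLinearMap ∘ₗ LinearMap.inl ℂ P.H ℂ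

/-- `A_α : H̃ → V`, with `A_α|0̂⟩ = τ/α` and `A_α = A` on `H`. -/
def Aalpha (α : ℝ) : P.Htilde →ₗ[ℂ] P.V :=
  (P.A.coprod (LinearMap.toSpanSingleton ℂ P.V (((α : ℂ))⁻¹ • P.tau))) ∘ₗ
    P.tildeEquiv.toLinearMap

/-- `H̃(x) = H(x) ⊕ ℂ|0̂⟩`. -/
def HxTilde (x : Fin m → Fin q) : Submodule ℂ P.Htilde :=
  ((P.Hx x).prod (⊤ : Submodule ℂ ℂ)).comap P.tildeEquiv.toLinearMap

/-- orthogonal projection onto a submodule, as an endomorphism. -/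
def projL (S : Submodule ℂ P.Htilde) : P.Htilde →ₗ[ℂ] P.Htilde :=
  S.subtype ∘ₗ (S.orthogonalProjection).toLinearMap

/-- `Λ_α`: the orthogonal projection of `H̃` onto `ker A_α`. -/
def Lambda (α : ℝ) : P.Htilde →ₗ[ℂ] P.Htilde :=
  P.projL (LinearMap.ker (P.Aalpha α))

/-- `Π_x`: the orthogonal projection of `H̃` onto `H̃(x)`. -/
def Pix (x : Fin m → Fin q) : P.Htilde →ₗ[ℂ] P.Htilde :=
  P.projL (P.HxTilde x)

/-- `U(P, x, α) = (2Π_x − I)(2Λ_α − I)`. -/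
def U (x : Fin m → Fin q) (α : ℝ) : P.Htilde →ₗ[ℂ] P.Htilde :=
  (2 • P.Pix x - LinearMap.id) ∘ₗ (2 • P.Lambda α - LinearMap.id)

end SpanProgram

/-- for a negative witness `ω` for `x` with Riesz representative `r`
of `ω∘A`, the vector `v = |0̂⟩ + α·r` satisfies `Π_x v = |0̂⟩`, `v ⊥ ker A_α`, and
`‖v‖² = 1 + α²‖ω∘A‖²`. -/
theorem negative_witness_vector {q n : ℕ} (hq : 2 ≤ q) (hn : 1 ≤ n)
    (P : SpanProgram q n) (x : Fin n → Fin q) (α : ℝ) (hα : 0 < α)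
    (ω : P.V →ₗ[ℂ] ℂ) (hω : P.NegWitness x ω)
    (r : P.H)
    (hr : r = (InnerProductSpace.toDual ℂ P.H).symm
      (LinearMap.toContinuousLinearMap (ω ∘ₗ P.A)))
    (v : P.Htilde) (hv : v = P.zeroHat + (α : ℂ) • P.embed r) :
    P.Pix x v = P.zeroHat ∧ v ∈ (LinearMap.ker (P.Aalpha α))ᗮ ∧
      ‖v‖ ^ 2 = 1 + α ^ 2 * ‖r‖ ^ 2 := by
  have hrinner : ∀ h : P.H, (inner ℂ r h : ℂ) = ω (P.A h) := by
    intro h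
    rw [hr]
    exact InnerProductSpace.toDual_symm_apply
  -- components
  have hzf : (P.zeroHat : WithLp 2 (P.H × ℂ)).fst = 0 := rfl
  have hzs : (P.zeroHat : WithLp 2 (P.H × ℂ)).snd = 1 := rfl
  have hef : (P.embed r : WithLp 2 (P.H × ℂ)).fst = r := rfl
  have hes : (P.embed r : WithLp 2 (P.H × ℂ)).snd = 0 := rfl
  have hvf : (v : WithLp 2 (P.H × ℂ)).fst = (α : ℂ) • r := by
    rw [hv]; show (P.zeroHat : WithLp 2 (P.H × ℂ)).fst + ((α : ℂ) • P.embed r :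
      WithLp 2 (P.H × ℂ)).fst = _
    rw [hzf]
    show (0 : P.H) + (α : ℂ) • (P.embed r : WithLp 2 (P.H × ℂ)).fst = _
    rw [hef, zero_add]
  have hvs : (v : WithLp 2 (P.H × ℂ)).snd = 1 := by
    rw [hv]; show (P.zeroHat : WithLp 2 (P.H × ℂ)).snd + ((α : ℂ) • P.embed r :
      WithLp 2 (P.H × ℂ)).snd = _
    rw [hzs]
    show (1 : ℂ) + (α : ℂ) • (P.embed r : WithLp 2 (P.H × ℂ)).snd = _
    rw [hes, smul_zero, add_zero]
  have htf : ∀ u : P.Htilde, (P.tildeEquiv u).1 = (u : WithLp 2 (P.H × ℂ)).fst := fun _ => rfl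
  have hts : ∀ u : P.Htilde, (P.tildeEquiv u).2 = (u : WithLp 2 (P.H × ℂ)).snd := fun _ => rfl
  have hinner : ∀ u w : P.Htilde, (inner ℂ u w : ℂ) =
      inner ℂ (u : WithLp 2 (P.H × ℂ)).fst (w : WithLp 2 (P.H × ℂ)).fst +
      inner ℂ (u : WithLp 2 (P.H × ℂ)).snd (w : WithLp 2 (P.H × ℂ)).snd := fun _ _ => rfl
  -- zeroHat ∈ HxTilde x
  have hz_mem : P.zeroHat ∈ P.HxTilde x := by
    simp only [SpanProgram.HxTilde, Submodule.mem_comap, Submodule.mem_prod]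
    constructor
    · exact (show (0 : P.H) ∈ P.Hx x from (P.Hx x).zero_mem)
    · trivial
  -- embed r ⊥ HxTilde x
  have he_orth : P.embed r ∈ (P.HxTilde x)ᗮ := by
    rw [Submodule.mem_orthogonal]
    intro u hu
    rw [hinner, hef, hes, inner_zero_right, add_zero]
    rw [SpanProgram.HxTilde, Submodule.mem_comap, Submodule.mem_prod] at hu
    have hu1 : (u : WithLp 2 (P.H × ℂ)).fst ∈ P.Hx x := hu.1
    have : (inner ℂ r (u : WithLp 2 (P.H × ℂ)).fst : ℂ) = 0 := by
      rw [hrinner]; exact hω.2 _ hu1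
    rw [← inner_conj_symm, this, map_zero]
  refine ⟨?_, ?_, ?_⟩
  · rw [hv, SpanProgram.Pix, SpanProgram.projL]
    simp only [LinearMap.comp_apply, LinearMap.map_add, LinearMap.map_smul,
      ContinuousLinearMap.coe_coe]
    have h1 : (((P.HxTilde x).orthogonalProjection) P.zeroHat : P.Htilde) = P.zeroHat :=
      Submodule.starProjection_eq_self_iff.mpr hz_mem
    have h2 : ((P.HxTilde x).orthogonalProjection) (P.embed r) = 0 :=
      Submodule.orthogonalProjectionOnto_apply_of_mem_orthogonal he_orth
    show (((P.HxTilde x).orthogonalProjection) P.zeroHat : P.Htilde) +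
      (α : ℂ) • (((P.HxTilde x).orthogonalProjection) (P.embed r) : P.Htilde) = P.zeroHat
    rw [h1, h2, Submodule.coe_zero, smul_zero, add_zero]
  · rw [Submodule.mem_orthogonal]
    intro u hu
    rw [LinearMap.mem_ker, SpanProgram.Aalpha, LinearMap.comp_apply,
      LinearMap.coprod_apply, LinearMap.toSpanSingleton_apply] at hu
    have hu' : P.A (u : WithLp 2 (P.H × ℂ)).fst +
        (u : WithLp 2 (P.H × ℂ)).snd • ((α : ℂ)⁻¹ • P.tau) = 0 := hu
    have hαC : (α : ℂ) ≠ 0 := Complex.ofReal_ne_zero.mpr hα.ne'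
    have hAf : ω (P.A (u : WithLp 2 (P.H × ℂ)).fst) =
        -((u : WithLp 2 (P.H × ℂ)).snd * (α : ℂ)⁻¹) := by
      have h0 := congrArg ω hu'
      rw [map_add, map_zero, map_smul, map_smul, hω.1] at h0
      simpa [smul_eq_mul, add_eq_zero_iff_eq_neg] using h0
    have h1 : (inner ℂ (u : WithLp 2 (P.H × ℂ)).fst r : ℂ) =
        starRingEnd ℂ (ω (P.A (u : WithLp 2 (P.H × ℂ)).fst)) := by
      rw [← inner_conj_symm, hrinner]
    rw [hinner, hvf, hvs, inner_smul_right, h1, hAf]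
    have h2 : (inner ℂ (u : WithLp 2 (P.H × ℂ)).snd (1 : ℂ) : ℂ) =
        starRingEnd ℂ (u : WithLp 2 (P.H × ℂ)).snd := by
      simp [RCLike.inner_apply]
    rw [h2]
    simp only [map_neg, map_mul, map_inv₀, Complex.conj_ofReal]
    field_simp
    ring
  · have : ‖v‖ ^ 2 = ‖(v : WithLp 2 (P.H × ℂ)).fst‖ ^ 2 +
        ‖(v : WithLp 2 (P.H × ℂ)).snd‖ ^ 2 := WithLp.prod_norm_sq_eq_of_L2 _
    rw [this, hvf, hvs, norm_one, norm_smul]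
    simp [Complex.norm_real, abs_of_pos hα, mul_pow]
    ring
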